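/- Let n ≥ 1, let τ be a faithful probability Radon measure on [0,1], and let σ be a faithful diffuse probability Radon measure on [0,1]. Then there exists an injective unital *-homomorphism φ : A_n → A_n such that ∫ tr(φ(f)(t)) dσ(t) = ∫ tr(f(t)) dτ(t) for all f ∈ A_n. -/

import Mathlib

open MeasureTheory
open scoped ENNReal

noncomputable section

/-- The unit interval `[0,1]` as a type. -/
abbrev 𝕀 : Type := unitInterval

/-- A measure on `[0,1]` is *faithful* if it assigns positive measure to every
nonempty (relatively) open subset. -/
def Faithful (μ : Measure 𝕀) : Prop :=
  ∀ U : Set 𝕀, IsOpen U → U.Nonempty → 0 < μ U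

/-- A measure on `[0,1]` is *diffuse* (atomless) if every singleton has measure zero. -/
def Diffuse (μ : Measure 𝕀) : Prop :=
  ∀ t : 𝕀, μ {t} = 0

open scoped Matrix.Norms.L2Operator ComplexOrder

/-- `n × n` complex matrices. -/
abbrev Mat (n : ℕ) : Type := Matrix (Fin n) (Fin n) ℂ

/-- The C*-algebra `𝔸 n = C([0,1], Mₙ(ℂ))` of continuous matrix-valued functions. -/
abbrev 𝔸 (n : ℕ) : Type := C(𝕀, Mat n)

/-- The tracial state on `𝔸 n` induced by the measure `μ` on `[0,1]`:
`f ↦ ∫ tr(f t) dμ(t)`, where `tr` is the normalized trace on `Mₙ(ℂ)`. -/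
def trInt (n : ℕ) (μ : Measure 𝕀) (f : 𝔸 n) : ℂ :=
  ∫ t, (f t).trace / (n : ℂ) ∂μ

namespace S3
open Set ProbabilityTheory Filter Topology
set_option linter.unusedSectionVars false
variable (μ : Measure 𝕀) [IsProbabilityMeasure μ]
def push : Measure ℝ := Measure.map Subtype.val μ
instance : IsProbabilityMeasure (push μ) :=
  Measure.isProbabilityMeasure_map measurable_subtype_coe.aemeasurable
lemma push_apply (s : Set ℝ) (hs : MeasurableSet s) :
    push μ s = μ (Subtype.val ⁻¹' s) :=
  Measure.map_apply measurable_subtype_coe hs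
def F : ℝ → ℝ := cdf (push μ)
lemma F_mono : Monotone (F μ) := monotone_cdf _
lemma F_nonneg (x : ℝ) : 0 ≤ F μ x := cdf_nonneg _ x
lemma F_le_one (x : ℝ) : F μ x ≤ 1 := cdf_le_one _ x
lemma ofReal_F (x : ℝ) : ENNReal.ofReal (F μ x) = push μ (Iic x) := ofReal_cdf _ x
lemma ofReal_F_coe (x : 𝕀) : ENNReal.ofReal (F μ ↑x) = μ (Iic x) := by
  rw [ofReal_F, push_apply _ _ measurableSet_Iic]; congr 1
lemma F_one : F μ 1 = 1 := by
  have h := ofReal_F_coe μ 1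
  have : μ (Iic (1:𝕀)) = 1 := by
    rw [show (Iic (1:𝕀)) = univ from eq_univ_of_forall (fun x => unitInterval.le_one x)]
    exact measure_univ
  rw [this] at h
  have := ENNReal.ofReal_eq_one.mp h
  simpa using this
lemma push_singleton (hd : Diffuse μ) (a : ℝ) : push μ {a} = 0 := by
  rw [push_apply _ _ (measurableSet_singleton a)]
  rcases eq_empty_or_nonempty (Subtype.val ⁻¹' ({a} : Set ℝ)) with h | ⟨x, hx⟩
  · rw [h]; exact measure_empty
  · have hsub : Subtype.val ⁻¹' ({a} : Set ℝ) ⊆ {x} := by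
      intro y hy
      simp only [mem_preimage, mem_singleton_iff] at *
      exact Subtype.ext (hy.trans hx.symm)
    exact le_antisymm ((measure_mono hsub).trans (hd x).le) zero_le
lemma F_continuous (hd : Diffuse μ) : Continuous (F μ) := by
  rw [continuous_iff_continuousAt]
  intro a
  have hmono : Monotone (F μ) := F_mono μ
  rw [hmono.continuousAt_iff_leftLim_eq_rightLim]
  have hR : Function.rightLim (F μ) a = F μ a := by
    rw [← hmono.continuousWithinAt_Ioi_iff_rightLim_eq]
    exact ((cdf (push μ)).right_continuous a).mono Ioi_subset_Ici_self
  have hL : Function.leftLim (F μ) a = F μ a := by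
    have hsing : (cdf (push μ)).measure {a} = 0 := by
      rw [measure_cdf]; exact push_singleton μ hd a
    rw [StieltjesFunction.measure_singleton] at hsing
    have h1 : F μ a - Function.leftLim (F μ) a ≤ 0 := by
      simpa [ENNReal.ofReal_eq_zero, F] using hsing
    have h2 : Function.leftLim (F μ) a ≤ F μ a := hmono.leftLim_le le_rfl
    have : F μ a = Function.leftLim (F μ) a := by linarith
    exact this.symm
  rw [hL, hR]
lemma F_zero (hd : Diffuse μ) : F μ 0 = 0 := by
  have h := ofReal_F_coe μ 0
  have h0 : Iic (0:𝕀) = {0} := by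
    ext x
    simp only [mem_Iic, mem_singleton_iff]
    exact ⟨fun hx => le_antisymm hx unitInterval.nonneg', by rintro rfl; rfl⟩
  rw [h0, hd 0] at h
  have h2 := F_nonneg μ ((0:𝕀):ℝ)
  have : F μ ((0:𝕀):ℝ) = 0 := le_antisymm (ENNReal.ofReal_eq_zero.mp h) h2
  simpa using this
lemma F_strictMono (hf : Faithful μ) {a b : 𝕀} (hab : a < b) : F μ ↑a < F μ ↑b := by
  have hcoe : (a:ℝ) < b := hab
  have hsplit : (Iic (a:ℝ)) ∪ Ioc (a:ℝ) b = Iic (b:ℝ) := Iic_union_Ioc_eq_Iic hcoe.le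
  have hdisj : Disjoint (Iic (a:ℝ)) (Ioc (a:ℝ) b) := Iic_disjoint_Ioc le_rfl
  have hmeas : push μ (Iic (b:ℝ)) = push μ (Iic (a:ℝ)) + push μ (Ioc (a:ℝ) b) := by
    rw [← hsplit, measure_union hdisj measurableSet_Ioc]
  have hpos : 0 < push μ (Ioc (a:ℝ) b) := by
    rw [push_apply _ _ measurableSet_Ioc]
    refine lt_of_lt_of_le ?_ (measure_mono (show Subtype.val ⁻¹' Ioo (a:ℝ) b ⊆ _ from
      fun y hy => ⟨hy.1, hy.2.le⟩))
    refine hf _ (continuous_subtype_val.isOpen_preimage _ isOpen_Ioo) ?_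
    refine ⟨⟨((a:ℝ)+b)/2, ?_, ?_⟩, ?_⟩
    · linarith [a.2.1]
    · linarith [b.2.2]
    · simp only [mem_preimage, mem_Ioo]
      exact ⟨by linarith, by linarith⟩
  have hlt : push μ (Iic (a:ℝ)) < push μ (Iic (b:ℝ)) := by
    rw [hmeas]
    exact ENNReal.lt_add_right (measure_ne_top _ _) hpos.ne'
  have h3 : ENNReal.ofReal (F μ (a:ℝ)) < ENNReal.ofReal (F μ (b:ℝ)) := by
    rw [ofReal_F, ofReal_F]; exact hlt
  exact (ENNReal.ofReal_lt_ofReal_iff_of_nonneg (F_nonneg μ (a:ℝ))).mp h3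

/-! ### Quantile -/

def Sset (u : ℝ) : Set ℝ := {t | t ∈ Icc (0:ℝ) 1 ∧ u ≤ F μ t}
def G (u : ℝ) : ℝ := sInf (Sset μ u)

lemma Sset_nonempty {u : ℝ} (hu : u ≤ 1) : (Sset μ u).Nonempty :=
  ⟨1, ⟨zero_le_one, le_rfl⟩, by rw [F_one]; exact hu⟩
lemma Sset_bddBelow (u : ℝ) : BddBelow (Sset μ u) := ⟨0, fun t ht => ht.1.1⟩
lemma G_mem {u : ℝ} (hu : u ≤ 1) : G μ u ∈ Icc (0:ℝ) 1 :=
  ⟨le_csInf (Sset_nonempty μ hu) fun t ht => ht.1.1,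
   csInf_le (Sset_bddBelow μ u) ⟨⟨zero_le_one, le_rfl⟩, by rw [F_one]; exact hu⟩⟩
lemma G_le {u t : ℝ} (ht : t ∈ Icc (0:ℝ) 1) (h : u ≤ F μ t) : G μ u ≤ t :=
  csInf_le (Sset_bddBelow μ u) ⟨ht, h⟩
lemma le_F_G {u : ℝ} (hu : u ≤ 1) : u ≤ F μ (G μ u) := by
  have hne := Sset_nonempty μ hu
  have htend : Tendsto (F μ) (𝓝[>] (G μ u)) (𝓝 (F μ (G μ u))) :=
    ((cdf (push μ)).right_continuous _).mono Ioi_subset_Ici_self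
  refine ge_of_tendsto htend ?_
  filter_upwards [self_mem_nhdsWithin] with x hx
  obtain ⟨s, hs, hsx⟩ := exists_lt_of_csInf_lt hne hx
  exact hs.2.trans (F_mono μ hsx.le)
lemma G_F (hf : Faithful μ) (t : 𝕀) : G μ (F μ ↑t) = ↑t := by
  refine le_antisymm (G_le μ t.2 le_rfl) ?_
  refine le_csInf (Sset_nonempty μ (F_le_one μ ↑t)) fun s hs => ?_
  by_contra h
  push_neg at h
  have : (⟨s, hs.1⟩ : 𝕀) < t := h
  exact absurd hs.2 (not_le.mpr (F_strictMono μ hf this))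
lemma G_mono {u v : ℝ} (huv : u ≤ v) (hv : v ≤ 1) : G μ u ≤ G μ v :=
  csInf_le_csInf (Sset_bddBelow μ u) (Sset_nonempty μ hv)
    (fun t ht => ⟨ht.1, huv.trans ht.2⟩)

lemma measure_F_le (hd : Diffuse μ) {c : ℝ} (hc : c ∈ Icc (0:ℝ) 1) :
    μ {x : 𝕀 | F μ ↑x ≤ c} = ENNReal.ofReal c := by
  set A : Set 𝕀 := {x | F μ ↑x ≤ c} with hA
  have h0A : (0:𝕀) ∈ A := by
    show F μ ↑(0:𝕀) ≤ c
    simpa [F_zero μ hd] using hc.1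
  set B := Subtype.val '' A with hB
  have h0B : (0:ℝ) ∈ B := ⟨0, h0A, rfl⟩
  have hBne : B.Nonempty := ⟨0, h0B⟩
  have hBbdd : BddAbove B := ⟨1, by rintro r ⟨x, hx, rfl⟩; exact x.2.2⟩
  set x0 := sSup B with hx0
  have hx0mem : x0 ∈ Icc (0:ℝ) 1 :=
    ⟨le_csSup hBbdd h0B, csSup_le hBne (by rintro r ⟨x, hx, rfl⟩; exact x.2.2)⟩
  have hFx0_le : F μ x0 ≤ c := by
    have hclosed : IsClosed {r : ℝ | F μ r ≤ c} := isClosed_le (F_continuous μ hd) continuous_const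
    have hmem : x0 ∈ closure B := csSup_mem_closure hBne hBbdd
    have hBsub : B ⊆ {r | F μ r ≤ c} := by rintro r ⟨x, hx, rfl⟩; exact hx
    exact closure_minimal hBsub hclosed hmem
  have hFx0 : F μ x0 = c := by
    by_contra hne
    have hmem2 : c ∈ Icc (F μ x0) (F μ 1) := ⟨hFx0_le, by rw [F_one]; exact hc.2⟩
    obtain ⟨y, hy, hyc⟩ :=
      intermediate_value_Icc hx0mem.2 ((F_continuous μ hd).continuousOn) hmem2
    have hyB : y ∈ B := ⟨⟨y, hx0mem.1.trans hy.1, hy.2⟩, by exact hyc.le, rfl⟩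
    have h1 : y ≤ x0 := le_csSup hBbdd hyB
    have h2 : y = x0 := le_antisymm h1 hy.1
    exact hne (h2 ▸ hyc)
  have hAIic : A = Iic (⟨x0, hx0mem⟩ : 𝕀) := by
    ext x
    constructor
    · intro hx
      exact Subtype.coe_le_coe.mp (show (x:ℝ) ≤ ((⟨x0, hx0mem⟩ : 𝕀) : ℝ) from le_csSup hBbdd ⟨x, hx, rfl⟩)
    · intro hx
      show F μ ↑x ≤ c
      calc F μ ↑x ≤ F μ x0 := F_mono μ hx
        _ = c := hFx0
  rw [hAIic, ← ofReal_F_coe μ]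
  exact congrArg ENNReal.ofReal hFx0

end S3

/-! ### The transport map -/

namespace S3
open Set ProbabilityTheory Filter Topology

variable (τ σ : Measure 𝕀) [IsProbabilityMeasure τ] [IsProbabilityMeasure σ]

def g : 𝕀 → 𝕀 := fun x => ⟨G τ (F σ ↑x), G_mem τ (F_le_one σ ↑x)⟩

lemma g_monotone : Monotone (g τ σ) := fun x y hxy =>
  Subtype.mk_le_mk.mpr (G_mono τ (F_mono σ hxy) (F_le_one σ _))

lemma g_surjective (hτf : Faithful τ) (hσd : Diffuse σ) : Function.Surjective (g τ σ) := by
  intro t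
  have hc : F τ ↑t ∈ Icc (0:ℝ) 1 := ⟨F_nonneg τ _, F_le_one τ _⟩
  have hmem : F τ ↑t ∈ Icc (F σ 0) (F σ 1) := by
    rw [F_zero σ hσd, F_one]; exact hc
  obtain ⟨y, hy, hyc⟩ :=
    intermediate_value_Icc zero_le_one ((F_continuous σ hσd).continuousOn) hmem
  refine ⟨⟨y, hy⟩, ?_⟩
  apply Subtype.ext
  show G τ (F σ y) = ↑t
  rw [hyc]
  exact G_F τ hτf t

lemma g_continuous (hτf : Faithful τ) (hσd : Diffuse σ) : Continuous (g τ σ) :=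
  (g_monotone τ σ).continuous_of_surjective (g_surjective τ σ hτf hσd)

lemma map_g (hτf : Faithful τ) (hσd : Diffuse σ) :
    Measure.map (g τ σ) σ = τ := by
  refine Measure.ext_of_Iic _ _ (fun t => ?_)
  rw [Measure.map_apply ((g_continuous τ σ hτf hσd).measurable) measurableSet_Iic]
  have hset : (g τ σ) ⁻¹' (Iic t) = {x : 𝕀 | F σ ↑x ≤ F τ ↑t} := by
    ext x
    simp only [mem_preimage, mem_Iic, mem_setOf_eq]
    constructor
    · intro h
      have h1 : (g τ σ x : ℝ) ≤ ↑t := h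
      exact (le_F_G τ (F_le_one σ ↑x)).trans (F_mono τ h1)
    · intro h
      exact Subtype.coe_le_coe.mp (G_le τ t.2 h)
  rw [hset, measure_F_le σ hσd ⟨F_nonneg τ _, F_le_one τ _⟩, ofReal_F_coe]

end S3


/-- For a faithful measure τ and a faithful diffuse measure σ on [0,1],
there is a morphism (injective unital *-homomorphism carrying the trace of σ back to the
trace of τ) from ⟨𝔸 n, τ⟩ into ⟨𝔸 n, σ⟩. -/
theorem statement3 (n : ℕ) (hn : 1 ≤ n) (τ σ : Measure 𝕀)
    [IsProbabilityMeasure τ] [IsProbabilityMeasure σ] [τ.Regular] [σ.Regular]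
    (hτf : Faithful τ) (hσf : Faithful σ) (hσd : Diffuse σ) :
    ∃ φ : 𝔸 n →⋆ₐ[ℂ] 𝔸 n, Function.Injective φ ∧
      ∀ f : 𝔸 n, trInt n σ (φ f) = trInt n τ f := by
  set g := S3.g τ σ with hg
  have hgc : Continuous g := S3.g_continuous τ σ hτf hσd
  have hgs : Function.Surjective g := S3.g_surjective τ σ hτf hσd
  have hmap : Measure.map g σ = τ := S3.map_g τ σ hτf hσd
  refine ⟨ContinuousMap.compStarAlgHom' ℂ (Mat n) ⟨g, hgc⟩, ?_, ?_⟩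
  · intro f1 f2 h
    refine ContinuousMap.ext fun x => ?_
    obtain ⟨w, rfl⟩ := hgs x
    exact ContinuousMap.congr_fun h w
  · intro f
    have hcont : Continuous (fun s : 𝕀 => (f s).trace / (n : ℂ)) :=
      (f.continuous.matrix_trace).div_const _
    calc trInt n σ (ContinuousMap.compStarAlgHom' ℂ (Mat n) ⟨g, hgc⟩ f)
        = ∫ x, (f (g x)).trace / (n : ℂ) ∂σ := rfl
      _ = ∫ s, (f s).trace / (n : ℂ) ∂(Measure.map g σ) :=
          (integral_map hgc.measurable.aemeasurable
            (hcont.aestronglyMeasurable)).symm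
      _ = trInt n τ f := by rw [hmap]; rfl
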